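/- Let m > 0, set δ = min(1, 2/m), and let g : (0, r₀] → ℝ be continuous with |g(r)| ≤ r^δ for all r ∈ (0, r₀]. Define ŵ(r) = ∫₀^r s^{1/m − 1} (∫₀^s m^{1/m − 1} g(t) dt) ds. Then both iterated integrals converge, ŵ is twice continuously differentiable on (0, r₀], and there is a constant C₃ depending only on m such that |ŵ(r)| ≤ C₃ r^δ · (m/(1+m)) m^{1/m} r^{(1+m)/m}, |ŵ'(r)| ≤ C₃ r^δ · (m r)^{1/m}, and |ŵ''(r)| ≤ C₃ r^δ · (m r)^{1/m − 1} for all r ∈ (0, r₀]. -/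
import Mathlib

open MeasureTheory

/-- FTC within `Ioc 0 r₀`: if `f` is integrable on `Ioc 0 s` for `s ≤ r₀` and continuous on
`Ioc 0 r₀`, then `F u = ∫ t in Ioc 0 u, f t` has derivative `f b` within `Ioc 0 r₀`. -/
lemma ftc_within_Ioc {r₀ : ℝ} (hr₀ : 0 < r₀) (f : ℝ → ℝ)
    (hint : ∀ s, s ≤ r₀ → IntegrableOn f (Set.Ioc 0 s))
    (hcont : ContinuousOn f (Set.Ioc 0 r₀)) (F : ℝ → ℝ)
    (hF : ∀ u, F u = ∫ t in Set.Ioc (0 : ℝ) u, f t)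
    {b : ℝ} (hb : b ∈ Set.Ioc (0 : ℝ) r₀) :
    HasDerivWithinAt F (f b) (Set.Ioc 0 r₀) b := by
  have hii : IntervalIntegrable f volume 0 b :=
    (intervalIntegrable_iff_integrableOn_Ioc_of_le hb.1.le).mpr (hint b hb.2)
  have hmeasIoc : AEStronglyMeasurable f (volume.restrict (Set.Ioc 0 r₀)) :=
    hcont.aestronglyMeasurable measurableSet_Ioc
  have hcw : ContinuousWithinAt f (Set.Ioc 0 r₀) b := hcont b hb
  have hF0 : HasDerivWithinAt (fun u => ∫ t in (0:ℝ)..u, f t) (f b) (Set.Ioc 0 r₀) b := by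
    rcases eq_or_lt_of_le hb.2 with heq | hlt
    · subst heq
      have hmem : Set.Ioc (0:ℝ) b ∈ nhdsWithin b (Set.Iic b) := by
        have : Set.Ioc (0:ℝ) b = Set.Ioi 0 ∩ Set.Iic b := by
          ext x; simp [Set.mem_Ioc, Set.mem_Ioi, Set.mem_Iic, and_comm]
        rw [this]
        exact Filter.inter_mem (mem_nhdsWithin_of_mem_nhds (isOpen_Ioi.mem_nhds hb.1))
          self_mem_nhdsWithin
      have hmeas : StronglyMeasurableAtFilter f (nhdsWithin b (Set.Iic b)) volume :=
        ⟨Set.Ioc 0 b, hmem, hmeasIoc⟩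
      have hcont' : ContinuousWithinAt f (Set.Iic b) b := hcw.mono_of_mem_nhdsWithin hmem
      exact (intervalIntegral.integral_hasDerivWithinAt_right hii hmeas hcont').mono
        Set.Ioc_subset_Iic_self
    · have hmem : Set.Ioc (0:ℝ) r₀ ∈ nhds b :=
        Filter.mem_of_superset (isOpen_Ioo.mem_nhds ⟨hb.1, hlt⟩) Set.Ioo_subset_Ioc_self
      have hmeas : StronglyMeasurableAtFilter f (nhds b) volume := ⟨Set.Ioc 0 r₀, hmem, hmeasIoc⟩
      exact (intervalIntegral.integral_hasDerivAt_right hii hmeas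
        (hcw.continuousAt hmem)).hasDerivWithinAt
  refine hF0.congr (fun u hu => ?_) ?_
  · rw [hF u, intervalIntegral.integral_of_le hu.1.le]
  · rw [hF b, intervalIntegral.integral_of_le hb.1.le]

/-- Lemma 6.4: for `m > 0`, `δ = min(1, 2/m)`, and `|g(r)| ≤ r^δ` on `(0, r₀]`, the
function `ŵ(r) = ∫₀^r s^(1/m-1) (∫₀^s m^(1/m-1) g(t) dt) ds` is well defined (both
iterated integrals converge), is `C²` on `(0, r₀]`, and satisfies the weighted bounds
`|ŵ| ≤ C₃ r^δ h(r)`, `|ŵ'| ≤ C₃ r^δ (mr)^(1/m)`, `|ŵ''| ≤ C₃ r^δ (mr)^(1/m-1)`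
with `C₃` depending only on `m`. -/
theorem weighted_double_integral_bound (m : ℝ) (hm : 0 < m) (δ : ℝ) (hδ : δ = min 1 (2 / m))
    (r₀ : ℝ) (hr₀ : 0 < r₀) (g : ℝ → ℝ) (hg_cont : ContinuousOn g (Set.Ioc 0 r₀))
    (hg : ∀ r ∈ Set.Ioc (0 : ℝ) r₀, |g r| ≤ r ^ δ)
    (w : ℝ → ℝ)
    (hw : ∀ r : ℝ, w r =
      ∫ s in Set.Ioc (0 : ℝ) r, s ^ (1 / m - 1) * ∫ t in Set.Ioc (0 : ℝ) s, m ^ (1 / m - 1) * g t) :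
    (∀ s ∈ Set.Ioc (0 : ℝ) r₀,
      IntegrableOn (fun t => m ^ (1 / m - 1) * g t) (Set.Ioc 0 s)) ∧
    (∀ r ∈ Set.Ioc (0 : ℝ) r₀,
      IntegrableOn (fun s => s ^ (1 / m - 1) * ∫ t in Set.Ioc (0 : ℝ) s, m ^ (1 / m - 1) * g t)
        (Set.Ioc 0 r)) ∧
    ContDiffOn ℝ 2 w (Set.Ioc 0 r₀) ∧
    ∃ C₃ > 0, ∀ r ∈ Set.Ioc (0 : ℝ) r₀,
      |w r| ≤ C₃ * r ^ δ * ((m / (1 + m)) * m ^ (1 / m) * r ^ ((1 + m) / m)) ∧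
      |derivWithin w (Set.Ioc 0 r₀) r| ≤ C₃ * r ^ δ * (m * r) ^ (1 / m) ∧
      |derivWithin (derivWithin w (Set.Ioc 0 r₀)) (Set.Ioc 0 r₀) r|
        ≤ C₃ * r ^ δ * (m * r) ^ (1 / m - 1) := by
  have h1m : (0:ℝ) < 1 / m := by positivity
  have hδpos : (0:ℝ) < δ := by rw [hδ]; exact lt_min one_pos (by positivity)
  have hδ1 : (-1:ℝ) < δ := by linarith
  have hδ1' : (0:ℝ) < δ + 1 := by linarith
  set c : ℝ := m ^ (1 / m - 1) with hc_def
  have hc : 0 < c := Real.rpow_pos_of_pos hm _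
  set S := Set.Ioc (0:ℝ) r₀ with hS
  -- inner integrand and its primitive
  set G : ℝ → ℝ := fun s => ∫ t in Set.Ioc (0 : ℝ) s, c * g t with hG_def
  set H : ℝ → ℝ := fun s => s ^ (1 / m - 1) * G s with hH_def
  -- pointwise bound on inner integrand
  have hgb : ∀ t ∈ S, ‖c * g t‖ ≤ c * t ^ δ := by
    intro t ht
    rw [norm_mul, Real.norm_eq_abs, Real.norm_eq_abs, abs_of_pos hc]
    exact mul_le_mul_of_nonneg_left (hg t ht) hc.le
  -- integrability of the bounding rpow
  have hRpowInt : ∀ (C p : ℝ), -1 < p → ∀ s : ℝ, IntegrableOn (fun t : ℝ => C * t ^ p) (Set.Ioc 0 s) := by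
    intro C p hp s
    rcases le_or_gt s 0 with h | h
    · simp [Set.Ioc_eq_empty (not_lt.mpr h), integrableOn_empty]
    · exact (intervalIntegrable_iff_integrableOn_Ioc_of_le h.le).mp
        ((intervalIntegral.intervalIntegrable_rpow' hp).const_mul C)
  -- inner integrability
  have hInner : ∀ s, s ≤ r₀ → IntegrableOn (fun t => c * g t) (Set.Ioc 0 s) := by
    intro s hs
    have hsub : Set.Ioc (0:ℝ) s ⊆ S := Set.Ioc_subset_Ioc_right hs
    have hmeas : AEStronglyMeasurable (fun t => c * g t) (volume.restrict (Set.Ioc 0 s)) :=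
      ((hg_cont.mono hsub).aestronglyMeasurable measurableSet_Ioc).const_mul c
    refine (hRpowInt c δ hδ1 s).mono' hmeas ?_
    refine (ae_restrict_iff' measurableSet_Ioc).mpr (Filter.Eventually.of_forall fun t ht => ?_)
    exact hgb t (hsub ht)
  -- value of the integral of the bounding rpow
  have hRpowVal : ∀ (C p : ℝ), -1 < p → ∀ s : ℝ, 0 < s →
      (∫ t in Set.Ioc (0:ℝ) s, C * t ^ p) = C / (p + 1) * s ^ (p + 1) := by
    intro C p hp s hs
    rw [← intervalIntegral.integral_of_le hs.le, intervalIntegral.integral_const_mul,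
      integral_rpow (Or.inl hp), Real.zero_rpow (by linarith)]
    ring
  -- bound on G
  have hGbound : ∀ s ∈ S, |G s| ≤ c / (δ + 1) * s ^ (δ + 1) := by
    intro s hs
    have hsub : Set.Ioc (0:ℝ) s ⊆ S := Set.Ioc_subset_Ioc_right hs.2
    have h1 : ‖∫ t in Set.Ioc (0:ℝ) s, c * g t‖ ≤ ∫ t in Set.Ioc (0:ℝ) s, c * t ^ δ := by
      refine norm_integral_le_of_norm_le (hRpowInt c δ hδ1 s) ?_
      exact (ae_restrict_iff' measurableSet_Ioc).mpr
        (Filter.Eventually.of_forall fun t ht => hgb t (hsub ht))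
    rw [Real.norm_eq_abs] at h1
    calc |G s| ≤ ∫ t in Set.Ioc (0:ℝ) s, c * t ^ δ := h1
      _ = c / (δ + 1) * s ^ (δ + 1) := hRpowVal c δ hδ1 s hs.1
  -- derivative of G within S
  have hGderiv : ∀ b ∈ S, HasDerivWithinAt G (c * g b) S b := by
    intro b hb
    exact ftc_within_Ioc hr₀ (fun t => c * g t) hInner (continuousOn_const.mul hg_cont) G
      (fun u => rfl) hb
  have hGcont : ContinuousOn G S := fun b hb => (hGderiv b hb).continuousWithinAt
  -- continuity of H
  have hrpow_cont : ∀ p : ℝ, ContinuousOn (fun s : ℝ => s ^ p) S := by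
    intro p
    exact fun x hx => (continuousWithinAt_id.rpow_const (Or.inl hx.1.ne'))
  have hHcont : ContinuousOn H S := (hrpow_cont _).mul hGcont
  -- bound on H
  have hHbound : ∀ s ∈ S, |H s| ≤ c / (δ + 1) * s ^ (1 / m + δ) := by
    intro s hs
    have hsp : (0:ℝ) < s ^ (1 / m - 1) := Real.rpow_pos_of_pos hs.1 _
    have : |H s| = s ^ (1 / m - 1) * |G s| := by
      rw [hH_def]
      simp only [abs_mul, abs_of_pos hsp]
    rw [this]
    calc s ^ (1 / m - 1) * |G s| ≤ s ^ (1 / m - 1) * (c / (δ + 1) * s ^ (δ + 1)) :=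
          mul_le_mul_of_nonneg_left (hGbound s hs) hsp.le
      _ = c / (δ + 1) * (s ^ (1 / m - 1) * s ^ (δ + 1)) := by ring
      _ = c / (δ + 1) * s ^ (1 / m + δ) := by
          rw [← Real.rpow_add hs.1]; ring_nf
  have hmδ1 : (-1:ℝ) < 1 / m + δ := by linarith
  -- outer integrability
  have hOuter : ∀ r, r ≤ r₀ → IntegrableOn H (Set.Ioc 0 r) := by
    intro r hr
    have hsub : Set.Ioc (0:ℝ) r ⊆ S := Set.Ioc_subset_Ioc_right hr
    have hmeas : AEStronglyMeasurable H (volume.restrict (Set.Ioc 0 r)) :=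
      (hHcont.mono hsub).aestronglyMeasurable measurableSet_Ioc
    refine (hRpowInt (c / (δ + 1)) _ hmδ1 r).mono' hmeas ?_
    refine (ae_restrict_iff' measurableSet_Ioc).mpr (Filter.Eventually.of_forall fun t ht => ?_)
    rw [Real.norm_eq_abs]
    exact hHbound t (hsub ht)
  -- w as integral of H
  have hwH : ∀ u : ℝ, w u = ∫ t in Set.Ioc (0:ℝ) u, H t := hw
  -- derivative of w within S
  have hwderiv : ∀ b ∈ S, HasDerivWithinAt w (H b) S b := by
    intro b hb
    exact ftc_within_Ioc hr₀ H hOuter hHcont w hwH hb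
  have hUD : UniqueDiffOn ℝ S := uniqueDiffOn_Ioc 0 r₀
  have hdw : ∀ r ∈ S, derivWithin w S r = H r := fun r hr =>
    (hwderiv r hr).derivWithin (hUD r hr)
  -- second derivative
  set H' : ℝ → ℝ := fun r => (1 / m - 1) * r ^ (1 / m - 1 - 1) * G r + r ^ (1 / m - 1) * (c * g r)
    with hH'_def
  have hHderiv : ∀ r ∈ S, HasDerivWithinAt H (H' r) S r := by
    intro r hr
    exact ((Real.hasDerivAt_rpow_const (p := 1 / m - 1)
      (Or.inl hr.1.ne')).hasDerivWithinAt).mul (hGderiv r hr)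
  have hdw2 : ∀ r ∈ S, derivWithin (derivWithin w S) S r = H' r := by
    intro r hr
    rw [derivWithin_congr hdw (hdw r hr)]
    exact (hHderiv r hr).derivWithin (hUD r hr)
  -- continuity of H'
  have hH'cont : ContinuousOn H' S :=
    ((continuousOn_const.mul (hrpow_cont _)).mul hGcont).add
      ((hrpow_cont _).mul (continuousOn_const.mul hg_cont))
  -- C² smoothness
  have hC2 : ContDiffOn ℝ 2 w S := by
    rw [show (2 : WithTop ℕ∞) = 1 + 1 by norm_num]
    refine (contDiffOn_succ_iff_derivWithin hUD).mpr
      ⟨fun r hr => (hwderiv r hr).differentiableWithinAt, by simp, ?_⟩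
    refine ContDiffOn.congr ?_ hdw
    rw [show (1 : WithTop ℕ∞) = 0 + 1 by norm_num]
    refine (contDiffOn_succ_iff_derivWithin hUD).mpr
      ⟨fun r hr => (hHderiv r hr).differentiableWithinAt, by simp, ?_⟩
    rw [contDiffOn_zero]
    exact hH'cont.congr (fun r hr => (hHderiv r hr).derivWithin (hUD r hr))
  -- bounds on w
  have hwbound : ∀ r ∈ S, |w r| ≤ c / (δ + 1) / (1 / m + δ + 1) * r ^ (1 / m + δ + 1) := by
    intro r hr
    have hsub : Set.Ioc (0:ℝ) r ⊆ S := Set.Ioc_subset_Ioc_right hr.2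
    have h1 : ‖∫ t in Set.Ioc (0:ℝ) r, H t‖ ≤
        ∫ t in Set.Ioc (0:ℝ) r, c / (δ + 1) * t ^ (1 / m + δ) := by
      refine norm_integral_le_of_norm_le (hRpowInt _ _ hmδ1 r) ?_
      refine (ae_restrict_iff' measurableSet_Ioc).mpr
        (Filter.Eventually.of_forall fun t ht => ?_)
      rw [Real.norm_eq_abs]
      exact hHbound t (hsub ht)
    rw [hwH r, ← Real.norm_eq_abs]
    calc ‖∫ t in Set.Ioc (0:ℝ) r, H t‖ ≤
        ∫ t in Set.Ioc (0:ℝ) r, c / (δ + 1) * t ^ (1 / m + δ) := h1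
      _ = c / (δ + 1) / (1 / m + δ + 1) * r ^ (1 / m + δ + 1) := by
          rw [hRpowVal _ _ hmδ1 r hr.1]
  -- constants
  have hP : (0:ℝ) < m / (1 + m) * m ^ (1 / m) := by positivity
  have hQ : (0:ℝ) < 1 / m + δ + 1 := by linarith
  set A : ℝ := c / (δ + 1) / (1 / m + δ + 1) / (m / (1 + m) * m ^ (1 / m)) with hA_def
  set B : ℝ := c / (δ + 1) / m ^ (1 / m) with hB_def
  set D : ℝ := (|1 / m - 1| * (c / (δ + 1)) + c) / m ^ (1 / m - 1) with hD_def
  have hA : 0 < A := by positivity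
  have hB : 0 < B := by positivity
  have hD : 0 ≤ D := by positivity
  refine ⟨fun s hs => hInner s hs.2, fun r hr => hOuter r hr.2, hC2,
    A + B + D + 1, by linarith, fun r hr => ?_⟩
  have hrp : 0 < r := hr.1
  refine ⟨?_, ?_, ?_⟩
  · -- bound on w
    have hexp : r ^ δ * r ^ ((1 + m) / m) = r ^ (1 / m + δ + 1) := by
      rw [← Real.rpow_add hrp]
      congr 1
      field_simp
      ring
    calc |w r| ≤ c / (δ + 1) / (1 / m + δ + 1) * r ^ (1 / m + δ + 1) := hwbound r hr
      _ = A * r ^ δ * (m / (1 + m) * m ^ (1 / m) * r ^ ((1 + m) / m)) := by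
          have hAP : A * (m / (1 + m) * m ^ (1 / m)) = c / (δ + 1) / (1 / m + δ + 1) :=
            div_mul_cancel₀ _ hP.ne'
          rw [← hAP, ← hexp]; ring
      _ ≤ (A + B + D + 1) * r ^ δ * (m / (1 + m) * m ^ (1 / m) * r ^ ((1 + m) / m)) := by
          have h2 : (0:ℝ) < r ^ δ * (m / (1 + m) * m ^ (1 / m) * r ^ ((1 + m) / m)) := by
            have := Real.rpow_pos_of_pos hrp δ
            have := Real.rpow_pos_of_pos hrp ((1 + m) / m)
            positivity
          have h3 : A + B + D + 1 = (A + B + D + 1) := rfl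
          calc _ = _ * (r ^ δ * _) := mul_assoc _ _ _
            _ ≤ (A + B + D + 1) * (r ^ δ * _) := mul_le_mul_of_nonneg_right (by linarith) h2.le
            _ = _ := (mul_assoc _ _ _).symm
  · -- bound on w'
    rw [hdw r hr]
    have hmr : (m * r) ^ (1 / m) = m ^ (1 / m) * r ^ (1 / m) := Real.mul_rpow hm.le hrp.le
    have hexp : r ^ δ * r ^ (1 / m) = r ^ (1 / m + δ) := by
      rw [← Real.rpow_add hrp]; ring_nf
    calc |H r| ≤ c / (δ + 1) * r ^ (1 / m + δ) := hHbound r hr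
      _ = B * r ^ δ * (m * r) ^ (1 / m) := by
          have hBP : B * m ^ (1 / m) = c / (δ + 1) :=
            div_mul_cancel₀ _ (Real.rpow_pos_of_pos hm (1 / m)).ne'
          rw [hmr, ← hBP, ← hexp]; ring
      _ ≤ (A + B + D + 1) * r ^ δ * (m * r) ^ (1 / m) := by
          have h2 : (0:ℝ) < r ^ δ * (m * r) ^ (1 / m) := by
            have := Real.rpow_pos_of_pos hrp δ
            have := Real.rpow_pos_of_pos (by positivity : (0:ℝ) < m * r) (1 / m)
            positivity
          have h3 : A + B + D + 1 = (A + B + D + 1) := rfl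
          calc _ = _ * (r ^ δ * _) := mul_assoc _ _ _
            _ ≤ (A + B + D + 1) * (r ^ δ * _) := mul_le_mul_of_nonneg_right (by linarith) h2.le
            _ = _ := (mul_assoc _ _ _).symm
  · -- bound on w''
    rw [hdw2 r hr]
    have hmr : (m * r) ^ (1 / m - 1) = m ^ (1 / m - 1) * r ^ (1 / m - 1) :=
      Real.mul_rpow hm.le hrp.le
    have hp1 : (0:ℝ) < r ^ (1 / m - 1 - 1) := Real.rpow_pos_of_pos hrp _
    have hp2 : (0:ℝ) < r ^ (1 / m - 1) := Real.rpow_pos_of_pos hrp _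
    have ht1 : |(1 / m - 1) * r ^ (1 / m - 1 - 1) * G r| ≤
        |1 / m - 1| * (c / (δ + 1)) * r ^ (1 / m + δ - 1) := by
      rw [abs_mul, abs_mul, abs_of_pos hp1]
      calc |1 / m - 1| * r ^ (1 / m - 1 - 1) * |G r| ≤
          |1 / m - 1| * r ^ (1 / m - 1 - 1) * (c / (δ + 1) * r ^ (δ + 1)) := by
            refine mul_le_mul_of_nonneg_left (hGbound r hr) (by positivity)
        _ = |1 / m - 1| * (c / (δ + 1)) * (r ^ (1 / m - 1 - 1) * r ^ (δ + 1)) := by ring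
        _ = |1 / m - 1| * (c / (δ + 1)) * r ^ (1 / m + δ - 1) := by
            rw [← Real.rpow_add hrp]; ring_nf
    have ht2 : |r ^ (1 / m - 1) * (c * g r)| ≤ c * r ^ (1 / m + δ - 1) := by
      rw [abs_mul, abs_mul, abs_of_pos hp2, abs_of_pos hc]
      calc r ^ (1 / m - 1) * (c * |g r|) ≤ r ^ (1 / m - 1) * (c * r ^ δ) :=
            mul_le_mul_of_nonneg_left (mul_le_mul_of_nonneg_left (hg r hr) hc.le) hp2.le
        _ = c * (r ^ (1 / m - 1) * r ^ δ) := by ring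
        _ = c * r ^ (1 / m + δ - 1) := by rw [← Real.rpow_add hrp]; ring_nf
    have hexp : r ^ δ * r ^ (1 / m - 1) = r ^ (1 / m + δ - 1) := by
      rw [← Real.rpow_add hrp]; ring_nf
    calc |H' r| ≤ |(1 / m - 1) * r ^ (1 / m - 1 - 1) * G r| + |r ^ (1 / m - 1) * (c * g r)| :=
          abs_add_le _ _
      _ ≤ |1 / m - 1| * (c / (δ + 1)) * r ^ (1 / m + δ - 1) + c * r ^ (1 / m + δ - 1) :=
          add_le_add ht1 ht2
      _ = (|1 / m - 1| * (c / (δ + 1)) + c) * r ^ (1 / m + δ - 1) := by ring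
      _ = D * r ^ δ * (m * r) ^ (1 / m - 1) := by
          have hDP : D * m ^ (1 / m - 1) = |1 / m - 1| * (c / (δ + 1)) + c :=
            div_mul_cancel₀ _ (Real.rpow_pos_of_pos hm (1 / m - 1)).ne'
          rw [hmr, ← hDP, ← hexp]; ring
      _ ≤ (A + B + D + 1) * r ^ δ * (m * r) ^ (1 / m - 1) := by
          have h2 : (0:ℝ) < r ^ δ * (m * r) ^ (1 / m - 1) := by
            have := Real.rpow_pos_of_pos hrp δ
            have := Real.rpow_pos_of_pos (by positivity : (0:ℝ) < m * r) (1 / m - 1)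
            positivity
          have h3 : A + B + D + 1 = (A + B + D + 1) := rfl
          calc _ = _ * (r ^ δ * _) := mul_assoc _ _ _
            _ ≤ (A + B + D + 1) * (r ^ δ * _) := mul_le_mul_of_nonneg_right (by linarith) h2.le
            _ = _ := (mul_assoc _ _ _).symm
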